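/- arXiv:1704.06536 — 7 statements merged into one kernel-verified Lean document; each statement's English description precedes it below -/
import Mathlib

section
/- Let G be a connected graph and A ⊆ V(G) a set of k ≥ 2 vertices. If H is a minimal induced connected subgraph of G containing A, then every subtree of H has at most k leaves. -/
open SimpleGraph



private lemma path_internal_two_nbrs {X : Type*} {Γ : SimpleGraph X} :
    ∀ {a b : X} (p : Γ.Walk a b), p.IsPath → ∀ c ∈ p.support, c ≠ a → c ≠ b →
      ∃ x y, x ≠ y ∧ Γ.Adj c x ∧ Γ.Adj c y := by
  intro a b p
  induction p with
  | nil =>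
    intro _ c hc hca _
    simp only [SimpleGraph.Walk.support_nil, List.mem_singleton] at hc
    exact absurd hc hca
  | @cons u v w h q ih =>
    intro hp c hc hca hcb
    rw [SimpleGraph.Walk.support_cons, List.mem_cons] at hc
    rcases hc with rfl | hc
    · exact absurd rfl hca
    · by_cases hcd : c = v
      · subst hcd
        cases q with
        | nil => exact absurd rfl hcb
        | @cons v e w h2 q2 =>
          refine ⟨u, e, ?_, h.symm, h2⟩
          rintro rfl
          have hup : u ∉ (SimpleGraph.Walk.cons h2 q2).support :=
            (SimpleGraph.Walk.cons_isPath_iff _ _).mp hp |>.2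
          exact hup (by
            rw [SimpleGraph.Walk.support_cons, List.mem_cons]
            right
            exact SimpleGraph.Walk.start_mem_support q2)
      · exact ih ((SimpleGraph.Walk.cons_isPath_iff _ _).mp hp).1 c hc hcd hcb

private lemma walk_avoid {V : Type*} {G : SimpleGraph V} {H : G.Subgraph} {v : V} :
    ∀ {a b : ↑H.verts} (p : H.coe.Walk a b), (∀ c ∈ p.support, (c : V) ≠ v) →
      ∀ (ha : (a : V) ∈ (H.deleteVerts {v}).verts) (hb : (b : V) ∈ (H.deleteVerts {v}).verts),
      (H.deleteVerts {v}).coe.Reachable ⟨a, ha⟩ ⟨b, hb⟩ := by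
  intro a b p
  induction p with
  | nil => intro _ _ _; rfl
  | @cons x y z h q ih =>
    intro hsup hx hz
    have hyv : (y : V) ≠ v := hsup y (by simp [SimpleGraph.Walk.support_cons])
    have hy : (y : V) ∈ (H.deleteVerts {v}).verts := by
      simp only [Subgraph.deleteVerts_verts, Set.mem_diff, Set.mem_singleton_iff]
      exact ⟨y.2, hyv⟩
    have hadj : (H.deleteVerts {v}).coe.Adj ⟨x, hx⟩ ⟨y, hy⟩ := by
      simp only [Subgraph.coe_adj, Subgraph.deleteVerts_adj, Set.mem_singleton_iff]
      refine ⟨x.2, ?_, y.2, hyv, ?_⟩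
      · simpa using (show (x : V) ∈ (H.deleteVerts {v}).verts from hx)
      · exact (Subgraph.coe_adj _ _ _).mp h
    exact hadj.reachable.trans (ih (fun c hc => hsup c (by simp [SimpleGraph.Walk.support_cons, hc])) hy hz)

private lemma delete_leaf_connected {V : Type*} {G : SimpleGraph V} {H : G.Subgraph}
    (hc : H.Connected) {v : V} (hdeg : (H.neighborSet v).ncard = 1) :
    (H.deleteVerts {v}).Connected := by
  obtain ⟨w, hw⟩ := Set.ncard_eq_one.mp hdeg
  have hvw : H.Adj v w := by rw [← Subgraph.mem_neighborSet, hw]; rfl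
  have hwv : (w : V) ≠ v := (G.ne_of_adj (H.adj_sub hvw)).symm
  have hwmem : w ∈ (H.deleteVerts {v}).verts := by
    simp only [Subgraph.deleteVerts_verts, Set.mem_diff, Set.mem_singleton_iff]
    exact ⟨H.edge_vert hvw.symm, hwv⟩
  classical
  rw [Subgraph.connected_iff]
  refine ⟨⟨?_⟩, ⟨w, hwmem⟩⟩
  rintro ⟨a, ha⟩ ⟨b, hb⟩
  have ha' := ha; have hb' := hb
  simp only [Subgraph.deleteVerts_verts, Set.mem_diff, Set.mem_singleton_iff] at ha' hb'
  obtain ⟨r⟩ := hc.coe ⟨a, ha'.1⟩ ⟨b, hb'.1⟩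
  have hp : r.toPath.1.IsPath := r.toPath.2
  have hav : ∀ c ∈ (r.toPath.1).support, (c : V) ≠ v := by
    intro c hcsup hcv
    have hca : c ≠ ⟨a, ha'.1⟩ := by intro hh; rw [hh] at hcv; exact ha'.2 hcv
    have hcb : c ≠ ⟨b, hb'.1⟩ := by intro hh; rw [hh] at hcv; exact hb'.2 hcv
    obtain ⟨x, y, hxy, hcx, hcy⟩ := path_internal_two_nbrs _ hp c hcsup hca hcb
    have hx : (x : V) ∈ H.neighborSet v := by
      rw [← hcv]; exact (Subgraph.coe_adj _ _ _).mp hcx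
    have hy : (y : V) ∈ H.neighborSet v := by
      rw [← hcv]; exact (Subgraph.coe_adj _ _ _).mp hcy
    rw [hw, Set.mem_singleton_iff] at hx hy
    exact hxy (Subtype.ext (hx.trans hy.symm))
  exact walk_avoid r.toPath.1 hav ha hb

private lemma sub_connected_induce {V : Type*} {G : SimpleGraph V} {H : G.Subgraph}
    (hc : H.Connected) : (G.induce H.verts).Connected := by
  exact Connected.map ⟨id, fun {a b} h => H.adj_sub h⟩ (fun y => ⟨y, rfl⟩) hc.coe

private lemma key_induction {V : Type*} [Fintype V] {G : SimpleGraph V} {A S : Set V} {k : ℕ}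
    (hA : A.ncard = k) (hAS : A ⊆ S) (hconn : (G.induce S).Connected)
    (hmin : ∀ S' : Set V, S' ⊆ S → A ⊆ S' → (G.induce S').Connected → S' = S) :
    ∀ (n : ℕ) (H : G.Subgraph), H.Connected → H.verts ⊆ S → (S \ H.verts).ncard = n →
      {v : V | (H.neighborSet v).ncard = 1}.ncard ≤ k := by
  intro n
  induction n with
  | zero =>
    intro H hc hsub hcard
    have hverts : H.verts = S := by
      have h0 : S \ H.verts = ∅ := by
        rw [← Set.ncard_eq_zero (Set.toFinite _)] ; exact hcard
      exact Set.Subset.antisymm hsub (Set.diff_eq_empty.mp h0)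
    have hsubA : {v : V | (H.neighborSet v).ncard = 1} ⊆ A := by
      intro v hv1
      simp only [Set.mem_setOf_eq] at hv1
      by_contra hvA
      obtain ⟨w, hw⟩ := Set.ncard_eq_one.mp hv1
      have hvw : H.Adj v w := by rw [← Subgraph.mem_neighborSet, hw]; rfl
      have hvmem : v ∈ S := hverts ▸ H.edge_vert hvw
      have hS' : (H.deleteVerts {v}).verts = S \ {v} := by
        rw [Subgraph.deleteVerts_verts, hverts]
      have hconn' : (G.induce (S \ {v})).Connected :=
        hS' ▸ sub_connected_induce (delete_leaf_connected hc hv1)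
      have heq := hmin (S \ {v}) Set.diff_subset
        (fun a ha => ⟨hAS ha, fun h => hvA (h ▸ ha)⟩) hconn'
      have : v ∈ S \ {v} := by rw [heq]; exact hvmem
      simp at this
    calc {v : V | (H.neighborSet v).ncard = 1}.ncard ≤ A.ncard :=
          Set.ncard_le_ncard hsubA A.toFinite
      _ = k := hA
  | succ n ih =>
    intro H hc hsub hcard
    classical
    obtain ⟨x0, hx0⟩ := Set.nonempty_of_ncard_ne_zero (by rw [hcard]; omega)
    obtain ⟨w1, hw1⟩ := hc.nonempty
    obtain ⟨p⟩ := hconn.preconnected ⟨w1, hsub hw1⟩ ⟨x0, hx0.1⟩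
    obtain ⟨d, -, hdfst, hdsnd⟩ := p.exists_boundary_dart {a : ↑S | (a : V) ∈ H.verts}
      hw1 hx0.2
    set w0 : V := (d.fst : V) with hw0def
    set x : V := (d.snd : V) with hxdef
    have hadj : G.Adj w0 x := d.adj
    have hw0 : w0 ∈ H.verts := hdfst
    have hxS : x ∈ S := d.snd.2
    have hxH : x ∉ H.verts := hdsnd
    have hw0x : w0 ≠ x := hadj.ne
    set H' : G.Subgraph := H ⊔ G.subgraphOfAdj hadj with hH'def
    have hverts' : H'.verts = H.verts ∪ {w0, x} := rfl
    have hc' : H'.Connected := by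
      refine Subgraph.connected_sup hc.preconnected (Subgraph.subgraphOfAdj_connected hadj).preconnected ⟨w0, ?_⟩
      simp only [Subgraph.verts_inf, Set.mem_inter_iff, subgraphOfAdj_verts]
      exact ⟨hw0, by simp⟩
    have hsub' : H'.verts ⊆ S := by
      rw [hverts']
      rintro a (ha | ha)
      · exact hsub ha
      · rcases ha with rfl | ha
        · exact d.fst.2
        · rw [Set.mem_singleton_iff] at ha; rw [ha]; exact hxS
    have hcard' : (S \ H'.verts).ncard = n := by
      have hset : S \ H'.verts = (S \ H.verts) \ {x} := by
        rw [hverts']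
        ext a
        simp only [Set.mem_diff, Set.mem_union, Set.mem_insert_iff, Set.mem_singleton_iff]
        constructor
        · rintro ⟨haS, ha⟩; push_neg at ha; exact ⟨⟨haS, ha.1⟩, ha.2.2⟩
        · rintro ⟨⟨haS, ha⟩, hax⟩
          refine ⟨haS, ?_⟩
          push_neg
          exact ⟨ha, fun h => absurd (h ▸ hw0) ha, hax⟩
      rw [hset]
      have hxmem : x ∈ S \ H.verts := ⟨hxS, hxH⟩
      have := Set.ncard_diff_singleton_add_one hxmem (Set.toFinite _)
      omega
    have hbound := ih H' hc' hsub' hcard'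
    -- now inject the leaf set of H into that of H'
    set f : V → V := fun v => if v = w0 then x else v with hfdef
    have hnbrx : H.neighborSet x = ∅ := by
      ext y
      simp only [Subgraph.mem_neighborSet, Set.mem_empty_iff_false, iff_false]
      intro hxy
      exact hxH (H.edge_vert hxy)
    have hmaps : ∀ v ∈ {v : V | (H.neighborSet v).ncard = 1},
        f v ∈ {v : V | (H'.neighborSet v).ncard = 1} := by
      intro v hv
      simp only [Set.mem_setOf_eq] at hv ⊢
      by_cases hvw0 : v = w0
      · have : f v = x := by simp [hfdef, hvw0]
        rw [this, hH'def, Subgraph.neighborSet_sup, hnbrx,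
          neighborSet_snd_subgraphOfAdj hadj]
        simp
      · have hfv : f v = v := by simp [hfdef, hvw0]
        have hvmem : v ∈ H.verts := by
          obtain ⟨w, hw⟩ := Set.ncard_eq_one.mp hv
          exact H.edge_vert (by rw [← Subgraph.mem_neighborSet, hw]; rfl)
        have hvx : v ≠ x := fun h => hxH (h ▸ hvmem)
        rw [hfv, hH'def, Subgraph.neighborSet_sup,
          neighborSet_subgraphOfAdj_of_ne_of_ne hadj hvw0 hvx, Set.union_empty]
        exact hv
    have hinj : Set.InjOn f {v : V | (H.neighborSet v).ncard = 1} := by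
      intro v hv v' hv' hff
      simp only [Set.mem_setOf_eq] at hv hv'
      have hmem : ∀ u : V, (H.neighborSet u).ncard = 1 → u ∈ H.verts := by
        intro u hu
        obtain ⟨w, hw⟩ := Set.ncard_eq_one.mp hu
        exact H.edge_vert (by rw [← Subgraph.mem_neighborSet, hw]; rfl)
      rw [hfdef] at hff
      simp only at hff
      by_cases h1 : v = w0 <;> by_cases h2 : v' = w0
      · rw [h1, h2]
      · rw [if_pos h1, if_neg h2] at hff
        exact absurd (by rw [hff]; exact hmem v' hv') hxH
      · rw [if_neg h1, if_pos h2] at hff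
        exact absurd (by rw [← hff]; exact hmem v hv) hxH
      · rwa [if_neg h1, if_neg h2] at hff
    calc {v : V | (H.neighborSet v).ncard = 1}.ncard
        = (f '' {v : V | (H.neighborSet v).ncard = 1}).ncard :=
          (Set.ncard_image_of_injOn hinj).symm
      _ ≤ {v : V | (H'.neighborSet v).ncard = 1}.ncard :=
          Set.ncard_le_ncard (Set.image_subset_iff.mpr hmaps) (Set.toFinite _)
      _ ≤ k := hbound


/-- If `H = G.induce S` is a minimal induced connected subgraph of a
connected graph `G` containing a set `A` of `k ≥ 2` vertices, then every subtree of
`H` (a tree that is a subgraph of `H`, on a vertex set `U ⊆ S`) has at most `k`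
leaves (vertices of degree 1 in the tree). -/
theorem minimal_connected_subgraph_subtree_leaves {V : Type*} [Fintype V]
    (G : SimpleGraph V) (hG : G.Connected) (A S : Set V) (k : ℕ) (hk : 2 ≤ k)
    (hA : A.ncard = k) (hAS : A ⊆ S) (hconn : (G.induce S).Connected)
    (hmin : ∀ S' : Set V, S' ⊆ S → A ⊆ S' → (G.induce S').Connected → S' = S) :
    ∀ (U : Set V), U ⊆ S → ∀ (T : SimpleGraph U), T ≤ G.induce U → T.IsTree →
      {u : U | (T.neighborSet u).ncard = 1}.ncard ≤ k := by
  intro U hU T hTle hT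
  -- package `T` as a subgraph of `G`
  set T₀ : G.Subgraph :=
    { verts := U
      Adj := fun x y => ∃ (hx : x ∈ U) (hy : y ∈ U), T.Adj ⟨x, hx⟩ ⟨y, hy⟩
      adj_sub := by
        rintro x y ⟨hx, hy, h⟩
        exact hTle h
      edge_vert := by rintro x y ⟨hx, hy, h⟩; exact hx
      symm := by constructor; rintro x y ⟨hx, hy, h⟩; exact ⟨hy, hx, h.symm⟩ } with hT₀def
  have hcoe : T₀.coe = T := by
    ext ⟨a, ha⟩ ⟨b, hb⟩
    constructor
    · rintro ⟨hx, hy, h⟩; exact h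
    · intro h; exact ⟨ha, hb, h⟩
  have hc0 : T₀.Connected := Subgraph.connected_iff'.mpr (by rw [hcoe]; exact hT.isConnected)
  have hleaf : {v : V | (T₀.neighborSet v).ncard = 1} =
      Subtype.val '' {u : U | (T.neighborSet u).ncard = 1} := by
    ext v
    simp only [Set.mem_setOf_eq, Set.mem_image]
    constructor
    · intro hv
      have hvU : v ∈ U := by
        obtain ⟨w, hw⟩ := Set.ncard_eq_one.mp hv
        have : T₀.Adj v w := by rw [← Subgraph.mem_neighborSet, hw]; rfl
        exact this.1
      refine ⟨⟨v, hvU⟩, ?_, rfl⟩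
      have him : T₀.neighborSet v = Subtype.val '' T.neighborSet ⟨v, hvU⟩ := by
        ext x
        simp only [Subgraph.mem_neighborSet, Set.mem_image, mem_neighborSet]
        constructor
        · rintro ⟨hx', hy', h⟩; exact ⟨⟨x, hy'⟩, h, rfl⟩
        · rintro ⟨⟨y, hy⟩, h, rfl⟩; exact ⟨hvU, hy, h⟩
      rw [him, Set.ncard_image_of_injective _ Subtype.val_injective] at hv
      exact hv
    · rintro ⟨⟨u, hu⟩, hcard, rfl⟩
      have him : T₀.neighborSet u = Subtype.val '' T.neighborSet ⟨u, hu⟩ := by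
        ext x
        simp only [Subgraph.mem_neighborSet, Set.mem_image, mem_neighborSet]
        constructor
        · rintro ⟨hx', hy', h⟩; exact ⟨⟨x, hy'⟩, h, rfl⟩
        · rintro ⟨⟨y, hy⟩, h, rfl⟩; exact ⟨hu, hy, h⟩
      rw [him, Set.ncard_image_of_injective _ Subtype.val_injective]
      exact hcard
  have hkey := key_induction hA hAS hconn hmin (S \ U).ncard T₀ hc0 hU rfl
  rw [hleaf, Set.ncard_image_of_injective _ Subtype.val_injective] at hkey
  exact hkey
end

section
/- Let G be a connected graph and A ⊆ V(G) with |A| = k ≥ 2. Every minimal induced connected subgraph H of G containing A can be 2-coloured so that each monochromatic component has at most ⌈k/2⌉ vertices. -/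
namespace ClusterProof

variable {V : Type*} (G : SimpleGraph V)

/-- adjacency within a set -/
def Rel (S : Set V) (a b : V) : Prop := G.Adj a b ∧ a ∈ S ∧ b ∈ S

/-- connectivity of the induced subgraph, phrased in the ambient type -/
def Conn (S : Set V) : Prop :=
  S.Nonempty ∧ ∀ x ∈ S, ∀ y ∈ S, Relation.ReflTransGen (Rel G S) x y

variable {G}

lemma Rel.symm' {S : Set V} {a b : V} (h : Rel G S a b) : Rel G S b a :=
  ⟨h.1.symm, h.2.2, h.2.1⟩

lemma rt_symm {S : Set V} {a b : V} (h : Relation.ReflTransGen (Rel G S) a b) :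
    Relation.ReflTransGen (Rel G S) b a := by
  induction h with
  | refl => exact .refl
  | tail _ hbc ih => exact .trans (.single hbc.symm') ih

lemma rt_mono {S T : Set V} (hST : S ⊆ T) {a b : V}
    (h : Relation.ReflTransGen (Rel G S) a b) :
    Relation.ReflTransGen (Rel G T) a b := by
  induction h with
  | refl => exact .refl
  | tail _ hbc ih => exact ih.tail ⟨hbc.1, hST hbc.2.1, hST hbc.2.2⟩

lemma rt_mem_right {S : Set V} {a b : V} (ha : a ∈ S)
    (h : Relation.ReflTransGen (Rel G S) a b) : b ∈ S := by
  induction h with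
  | refl => exact ha
  | tail _ hbc _ => exact hbc.2.2

lemma walk_to_rt {S : Set V} : ∀ {A B : ↑S}, (G.induce S).Walk A B →
    Relation.ReflTransGen (Rel G S) A.val B.val := by
  intro A B w
  induction w with
  | nil => exact .refl
  | cons h _ ih =>
      exact Relation.ReflTransGen.head ⟨h, Subtype.coe_prop _, Subtype.coe_prop _⟩ ih

lemma rt_to_reachable {S : Set V} {a b : V}
    (h : Relation.ReflTransGen (Rel G S) a b) :
    ∀ (ha : a ∈ S) (hb : b ∈ S), (G.induce S).Reachable ⟨a, ha⟩ ⟨b, hb⟩ := by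
  induction h with
  | refl => intro ha hb; rfl
  | tail _ hbc ih =>
      intro ha hb
      exact (ih ha hbc.2.1).trans (SimpleGraph.Adj.reachable (by exact hbc.1))

lemma conn_iff_induce {S : Set V} : (G.induce S).Connected ↔ Conn G S := by
  constructor
  · intro h
    obtain ⟨⟨x, hx⟩⟩ := h.nonempty
    refine ⟨⟨x, hx⟩, fun a ha b hb => ?_⟩
    obtain ⟨w⟩ := h.preconnected ⟨a, ha⟩ ⟨b, hb⟩
    exact walk_to_rt w
  · rintro ⟨⟨x, hx⟩, hreach⟩
    haveI : Nonempty ↑S := ⟨⟨x, hx⟩⟩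
    refine ⟨fun a b => ?_⟩
    exact rt_to_reachable (hreach a a.2 b b.2) a.2 b.2

lemma conn_union {P Q : Set V} {x : V} (hP : Conn G P) (hQ : Conn G Q)
    (hxP : x ∈ P) (hxQ : x ∈ Q) : Conn G (P ∪ Q) := by
  refine ⟨⟨x, Or.inl hxP⟩, fun a ha b hb => ?_⟩
  have hax : ∀ a ∈ P ∪ Q, Relation.ReflTransGen (Rel G (P ∪ Q)) a x := by
    rintro a (ha | ha)
    · exact rt_mono Set.subset_union_left (hP.2 a ha x hxP)
    · exact rt_mono Set.subset_union_right (hQ.2 a ha x hxQ)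
  exact (hax a ha).trans (rt_symm (hax b hb))


lemma closed_rt {S C M : Set V} {v : V}
    (hcl : ∀ u ∈ C, ∀ w, Rel G (S \ {v}) u w → w ∈ C)
    (hM : M ⊆ S \ {v}) {m u : V} (hm : m ∈ C)
    (h : Relation.ReflTransGen (Rel G M) m u) : u ∈ C := by
  induction h with
  | refl => exact hm
  | tail _ hbc ih => exact hcl _ ih _ ⟨hbc.1, hM hbc.2.1, hM hbc.2.2⟩

lemma conn_piece {S W C : Set V} {v : V}
    (hC : C ⊆ S \ {v}) (hcl : ∀ u ∈ C, ∀ w, Rel G (S \ {v}) u w → w ∈ C)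
    (hW : W ⊆ S) (hvW : v ∈ W)
    (hreach : ∀ u ∈ W, Relation.ReflTransGen (Rel G W) u v) :
    Conn G (W ∩ (C ∪ {v})) := by
  have trunc : ∀ u, Relation.ReflTransGen (Rel G W) u v → u ∈ C ∪ {v} →
      Relation.ReflTransGen (Rel G (W ∩ (C ∪ {v}))) u v := by
    intro u h
    induction h using Relation.ReflTransGen.head_induction_on with
    | refl => intro _; exact .refl
    | head h' hrest ih =>
        rename_i a cc
        intro ha
        rcases ha with ha | ha
        · by_cases hcc : cc = v
          · subst hcc
            exact .single ⟨h'.1, ⟨h'.2.1, Or.inl ha⟩, ⟨h'.2.2, Or.inr rfl⟩⟩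
          · have hccC : cc ∈ C :=
              hcl a ha cc ⟨h'.1, hC ha, ⟨hW h'.2.2, by simp [hcc]⟩⟩
            exact .head ⟨h'.1, ⟨h'.2.1, Or.inl ha⟩, ⟨h'.2.2, Or.inl hccC⟩⟩ (ih (Or.inl hccC))
        · simp only [Set.mem_singleton_iff] at ha
          subst ha
          exact .refl
  refine ⟨⟨v, hvW, Or.inr rfl⟩, fun a ha b hb => ?_⟩
  exact (trunc a (hreach a ha.1) ha.2).trans (rt_symm (trunc b (hreach b hb.1) hb.2))


lemma main (G : SimpleGraph V) [Fintype V] :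
    ∀ (n : ℕ) (S A : Set V) (r : V), S.ncard ≤ n → 2 ≤ A.ncard → r ∈ A → A ⊆ S →
    Conn G S → (∀ S' : Set V, S' ⊆ S → A ⊆ S' → Conn G S' → S' = S) →
    ∃ c : V → Fin 2, ∀ M : Set V, M ⊆ S → (∀ u ∈ M, ∀ w ∈ M, c u = c w) →
      Conn G M → M.ncard ≤ (A.ncard + 1) / 2 ∧ (r ∈ M → M.ncard ≤ A.ncard / 2) := by
  intro n
  induction n with
  | zero =>
      intro S A r hSn hA _ hAS _ _
      exfalso
      have := Set.ncard_le_ncard hAS S.toFinite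
      omega
  | succ n ih =>
      intro S A r hSn hA hrA hAS hconn hmin
      classical
      by_cases hSA : S ⊆ A
      · -- base case : S = A, split by cardinality
        have hSA' : S = A := hSA.antisymm hAS
        have hrs : ({r} : Set V) ⊆ A := Set.singleton_subset_iff.2 hrA
        have hdiff : (A \ {r}).ncard = A.ncard - 1 := by
          rw [Set.ncard_diff hrs, Set.ncard_singleton]
        obtain ⟨T', hT'sub, hT'card⟩ :=
          Set.exists_subset_card_eq (s := A \ {r}) (n := A.ncard / 2 - 1) (by omega)
        have hrT' : r ∉ T' := fun h => (hT'sub h).2 rfl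
        have hTcard : (insert r T').ncard = A.ncard / 2 := by
          rw [Set.ncard_insert_of_notMem hrT']; omega
        have hTA : insert r T' ⊆ A := Set.insert_subset hrA (hT'sub.trans Set.diff_subset)
        refine ⟨fun u => if u ∈ insert r T' then 0 else 1, fun M hMS hmono hMconn => ?_⟩
        obtain ⟨⟨m₀, hm₀⟩, -⟩ := hMconn
        by_cases hm₀T : m₀ ∈ insert r T'
        · have hMT : M ⊆ insert r T' := by
            intro u hu
            have h := hmono u hu m₀ hm₀
            by_contra huT
            simp only [if_neg huT, if_pos hm₀T] at h
            exact absurd h (by decide)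
          have h1 : M.ncard ≤ A.ncard / 2 := hTcard ▸ Set.ncard_le_ncard hMT
          exact ⟨by omega, fun _ => h1⟩
        · have hMT : M ⊆ A \ insert r T' := by
            intro u hu
            have h := hmono u hu m₀ hm₀
            refine ⟨hSA' ▸ hMS hu, fun huT => ?_⟩
            simp only [if_pos huT, if_neg hm₀T] at h
            exact absurd h (by decide)
          have hATcard : (A \ insert r T').ncard = A.ncard - A.ncard / 2 := by
            rw [Set.ncard_diff hTA, hTcard]
          have h1 : M.ncard ≤ A.ncard - A.ncard / 2 :=
            hATcard ▸ Set.ncard_le_ncard hMT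
          exact ⟨by omega, fun hrM => absurd (Set.mem_insert r T') (hMT hrM).2⟩
      · -- recursive case
        obtain ⟨v, hvS, hvA⟩ := Set.not_subset.1 hSA
        have hASv : A ⊆ S \ {v} := fun a ha => ⟨hAS ha, fun h => hvA (h ▸ ha)⟩
        have hnc : ¬ Conn G (S \ {v}) := by
          intro h
          have heq := hmin (S \ {v}) Set.diff_subset hASv h
          have hvv : v ∈ S \ {v} := heq.symm ▸ hvS
          exact hvv.2 rfl
        have hrSv : r ∈ S \ {v} := hASv hrA
        rw [Conn] at hnc
        push_neg at hnc
        obtain ⟨x, hx, y, hy, hxy⟩ := hnc ⟨r, hrSv⟩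
        set C₁ : Set V := {z | z ∈ S \ {v} ∧ Relation.ReflTransGen (Rel G (S \ {v})) r z}
          with hC₁def
        have hC₁sub : C₁ ⊆ S \ {v} := fun z hz => hz.1
        have hrC₁ : r ∈ C₁ := ⟨hrSv, .refl⟩
        have hcl₁ : ∀ u ∈ C₁, ∀ w, Rel G (S \ {v}) u w → w ∈ C₁ :=
          fun u hu w hw => ⟨⟨hw.2.2.1, hw.2.2.2⟩, hu.2.tail hw⟩
        set C₂ : Set V := (S \ {v}) \ C₁ with hC₂def
        have hC₂sub : C₂ ⊆ S \ {v} := Set.diff_subset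
        have hcl₂ : ∀ u ∈ C₂, ∀ w, Rel G (S \ {v}) u w → w ∈ C₂ := by
          intro u hu w hw
          exact ⟨⟨hw.2.2.1, hw.2.2.2⟩, fun hwC₁ => hu.2 (hcl₁ w hwC₁ u hw.symm')⟩
        have hdisj : ∀ z, z ∈ C₁ → z ∈ C₂ → False := fun z h1 h2 => h2.2 h1
        have hvC₁ : v ∉ C₁ := fun h => (hC₁sub h).2 rfl
        have hvC₂ : v ∉ C₂ := fun h => (hC₂sub h).2 rfl
        obtain ⟨x₂, hx₂⟩ : ∃ z, z ∈ C₂ := by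
          by_cases hxC : x ∈ C₁
          · by_cases hyC : y ∈ C₁
            · exact absurd ((rt_symm hxC.2).trans hyC.2) hxy
            · exact ⟨y, hy, hyC⟩
          · exact ⟨x, hx, hxC⟩
        have hSsplit : S \ {v} = C₁ ∪ C₂ := by
          ext z
          constructor
          · intro hz
            by_cases h : z ∈ C₁
            · exact Or.inl h
            · exact Or.inr ⟨hz, h⟩
          · rintro (h | h)
            · exact hC₁sub h
            · exact hC₂sub h
        have hC₁vS : C₁ ∪ {v} ⊆ S :=
          Set.union_subset (hC₁sub.trans Set.diff_subset) (Set.singleton_subset_iff.2 hvS)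
        have hC₂vS : C₂ ∪ {v} ⊆ S :=
          Set.union_subset (hC₂sub.trans Set.diff_subset) (Set.singleton_subset_iff.2 hvS)
        have hreachS : ∀ u ∈ S, Relation.ReflTransGen (Rel G S) u v :=
          fun u hu => hconn.2 u hu v hvS
        have hconn₁ : Conn G (C₁ ∪ {v}) := by
          have h := conn_piece hC₁sub hcl₁ (subset_refl S) hvS hreachS
          rwa [Set.inter_eq_self_of_subset_right hC₁vS] at h
        have hconn₂ : Conn G (C₂ ∪ {v}) := by
          have h := conn_piece hC₂sub hcl₂ (subset_refl S) hvS hreachS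
          rwa [Set.inter_eq_self_of_subset_right hC₂vS] at h
        have hmin₁ : ∀ S' ⊆ C₁ ∪ {v}, insert v (A ∩ C₁) ⊆ S' → Conn G S' →
            S' = C₁ ∪ {v} := by
          intro S' hS'sub hS'A hS'conn
          have hvS' : v ∈ S' := hS'A (Set.mem_insert v _)
          have hunion : Conn G (S' ∪ (C₂ ∪ {v})) :=
            conn_union hS'conn hconn₂ hvS' (Or.inr rfl)
          have hsub : S' ∪ (C₂ ∪ {v}) ⊆ S := Set.union_subset (hS'sub.trans hC₁vS) hC₂vS
          have hAsub : A ⊆ S' ∪ (C₂ ∪ {v}) := by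
            intro a ha
            have haa : a ∈ C₁ ∪ C₂ := hSsplit ▸ hASv ha
            rcases haa with h | h
            · exact Or.inl (hS'A (Set.mem_insert_of_mem _ ⟨ha, h⟩))
            · exact Or.inr (Or.inl h)
          have heq := hmin _ hsub hAsub hunion
          refine hS'sub.antisymm ?_
          rintro z (hz | hz)
          · have hzS : z ∈ S' ∪ (C₂ ∪ {v}) := heq.symm ▸ (hC₁vS (Or.inl hz))
            rcases hzS with h | h
            · exact h
            · rcases h with h | h
              · exact (hdisj z hz h).elim
              · exact ((hC₁sub hz).2 h).elim
          · exact hz ▸ hvS'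
        have hmin₂ : ∀ S' ⊆ C₂ ∪ {v}, insert v (A ∩ C₂) ⊆ S' → Conn G S' →
            S' = C₂ ∪ {v} := by
          intro S' hS'sub hS'A hS'conn
          have hvS' : v ∈ S' := hS'A (Set.mem_insert v _)
          have hunion : Conn G (S' ∪ (C₁ ∪ {v})) :=
            conn_union hS'conn hconn₁ hvS' (Or.inr rfl)
          have hsub : S' ∪ (C₁ ∪ {v}) ⊆ S := Set.union_subset (hS'sub.trans hC₂vS) hC₁vS
          have hAsub : A ⊆ S' ∪ (C₁ ∪ {v}) := by
            intro a ha
            have haa : a ∈ C₁ ∪ C₂ := hSsplit ▸ hASv ha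
            rcases haa with h | h
            · exact Or.inr (Or.inl h)
            · exact Or.inl (hS'A (Set.mem_insert_of_mem _ ⟨ha, h⟩))
          have heq := hmin _ hsub hAsub hunion
          refine hS'sub.antisymm ?_
          rintro z (hz | hz)
          · have hzS : z ∈ S' ∪ (C₁ ∪ {v}) := heq.symm ▸ (hC₂vS (Or.inl hz))
            rcases hzS with h | h
            · exact h
            · rcases h with h | h
              · exact (hdisj z h hz).elim
              · exact ((hC₂sub hz).2 h).elim
          · exact hz ▸ hvS'
        have hAC₁ : (A ∩ C₁).Nonempty := by
          by_contra h
          rw [Set.not_nonempty_iff_eq_empty] at h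
          have hsub : A ⊆ C₂ ∪ {v} := by
            intro a ha
            have haa : a ∈ C₁ ∪ C₂ := hSsplit ▸ hASv ha
            rcases haa with hc | hc
            · exfalso
              have hmem : a ∈ A ∩ C₁ := ⟨ha, hc⟩
              rw [h] at hmem
              exact hmem
            · exact Or.inl hc
          have heq := hmin _ hC₂vS hsub hconn₂
          have hr' : r ∈ C₂ ∪ {v} := heq.symm ▸ hAS hrA
          rcases hr' with hc | hc
          · exact hdisj r hrC₁ hc
          · exact hrSv.2 hc
        have hAC₂ : (A ∩ C₂).Nonempty := by
          by_contra h
          rw [Set.not_nonempty_iff_eq_empty] at h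
          have hsub : A ⊆ C₁ ∪ {v} := by
            intro a ha
            have haa : a ∈ C₁ ∪ C₂ := hSsplit ▸ hASv ha
            rcases haa with hc | hc
            · exact Or.inl hc
            · exfalso
              have hmem : a ∈ A ∩ C₂ := ⟨ha, hc⟩
              rw [h] at hmem
              exact hmem
          have heq := hmin _ hC₁vS hsub hconn₁
          have hx₂' : x₂ ∈ C₁ ∪ {v} := heq.symm ▸ hC₂vS (Or.inl hx₂)
          rcases hx₂' with hc | hc
          · exact hdisj x₂ hc hx₂
          · exact (hC₂sub hx₂).2 hc
        have hk₁ : (insert v (A ∩ C₁)).ncard = (A ∩ C₁).ncard + 1 :=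
          Set.ncard_insert_of_notMem (fun h => hvC₁ h.2)
        have hk₂ : (insert v (A ∩ C₂)).ncard = (A ∩ C₂).ncard + 1 :=
          Set.ncard_insert_of_notMem (fun h => hvC₂ h.2)
        have hAunion : (A ∩ C₁) ∪ (A ∩ C₂) = A := by
          ext a
          constructor
          · rintro (h | h)
            · exact h.1
            · exact h.1
          · intro ha
            have haa : a ∈ C₁ ∪ C₂ := hSsplit ▸ hASv ha
            rcases haa with h | h
            · exact Or.inl ⟨ha, h⟩
            · exact Or.inr ⟨ha, h⟩
        have hdisjA : Disjoint (A ∩ C₁) (A ∩ C₂) := by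
          rw [Set.disjoint_left]
          intro a h1 h2
          exact hdisj a h1.2 h2.2
        have hksum : (A ∩ C₁).ncard + (A ∩ C₂).ncard = A.ncard := by
          rw [← Set.ncard_union_eq hdisjA, hAunion]
        have h1pos : 0 < (A ∩ C₁).ncard := (Set.ncard_pos (Set.toFinite _)).2 hAC₁
        have h2pos : 0 < (A ∩ C₂).ncard := (Set.ncard_pos (Set.toFinite _)).2 hAC₂
        have hcard₁ : (C₁ ∪ {v}).ncard ≤ n := by
          have hss : C₁ ∪ {v} ⊂ S := by
            refine ⟨hC₁vS, fun hs => ?_⟩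
            have hh := hs (hC₂vS (Or.inl hx₂))
            rcases hh with h | h
            · exact hdisj x₂ h hx₂
            · exact (hC₂sub hx₂).2 h
          have := Set.ncard_lt_ncard hss
          omega
        have hcard₂ : (C₂ ∪ {v}).ncard ≤ n := by
          have hss : C₂ ∪ {v} ⊂ S := by
            refine ⟨hC₂vS, fun hs => ?_⟩
            have hh := hs (hAS hrA)
            rcases hh with h | h
            · exact hdisj r hrC₁ h
            · exact hrSv.2 h
          have := Set.ncard_lt_ncard hss
          omega
        obtain ⟨c₁, hc₁⟩ := ih (C₁ ∪ {v}) (insert v (A ∩ C₁)) r hcard₁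
          (by rw [hk₁]; omega) (Set.mem_insert_of_mem _ ⟨hrA, hrC₁⟩)
          (Set.insert_subset (Or.inr rfl) (fun a ha => Or.inl ha.2)) hconn₁ hmin₁
        obtain ⟨c₂, hc₂⟩ := ih (C₂ ∪ {v}) (insert v (A ∩ C₂)) v hcard₂
          (by rw [hk₂]; omega) (Set.mem_insert v _)
          (Set.insert_subset (Or.inr rfl) (fun a ha => Or.inl ha.2)) hconn₂ hmin₂
        set d₁ : V → Fin 2 := fun u => c₁ u + c₁ v with hd₁def
        set d₂ : V → Fin 2 := fun u => c₂ u + c₂ v with hd₂def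
        have hself : ∀ a : Fin 2, a + a = 0 := by decide
        have hd₁v : d₁ v = 0 := hself (c₁ v)
        have hd₂v : d₂ v = 0 := hself (c₂ v)
        set c : V → Fin 2 := fun u => if u ∈ C₂ then d₂ u else d₁ u with hcdef
        have hcc₁ : ∀ u ∈ C₁ ∪ {v}, c u = d₁ u := by
          rintro u (hu | hu)
          · exact if_neg (fun h => hdisj u hu h)
          · rw [hu]
            exact if_neg hvC₂
        have hcc₂ : ∀ u ∈ C₂ ∪ {v}, c u = d₂ u := by
          rintro u (hu | hu)
          · exact if_pos hu
          · rw [hu]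
            rw [show c v = d₁ v from if_neg hvC₂, hd₁v, hd₂v]
        refine ⟨c, fun M hMS hmono hMconn => ?_⟩
        have hmono₁ : ∀ (N : Set V), N ⊆ C₁ ∪ {v} → N ⊆ M →
            ∀ u ∈ N, ∀ w ∈ N, c₁ u = c₁ w := by
          intro N hN hNM u hu w hw
          have h := hmono u (hNM hu) w (hNM hw)
          rw [hcc₁ u (hN hu), hcc₁ w (hN hw)] at h
          exact add_right_cancel h
        have hmono₂ : ∀ (N : Set V), N ⊆ C₂ ∪ {v} → N ⊆ M →
            ∀ u ∈ N, ∀ w ∈ N, c₂ u = c₂ w := by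
          intro N hN hNM u hu w hw
          have h := hmono u (hNM hu) w (hNM hw)
          rw [hcc₂ u (hN hu), hcc₂ w (hN hw)] at h
          exact add_right_cancel h
        by_cases hvM : v ∈ M
        · -- v ∈ M : split M at v
          have hconnM₁ : Conn G (M ∩ (C₁ ∪ {v})) :=
            conn_piece hC₁sub hcl₁ hMS hvM (fun u hu => hMconn.2 u hu v hvM)
          have hconnM₂ : Conn G (M ∩ (C₂ ∪ {v})) :=
            conn_piece hC₂sub hcl₂ hMS hvM (fun u hu => hMconn.2 u hu v hvM)
          have hb₁ := hc₁ (M ∩ (C₁ ∪ {v})) Set.inter_subset_right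
            (hmono₁ _ Set.inter_subset_right Set.inter_subset_left) hconnM₁
          have hb₂ := hc₂ (M ∩ (C₂ ∪ {v})) Set.inter_subset_right
            (hmono₂ _ Set.inter_subset_right Set.inter_subset_left) hconnM₂
          have hm2 := hb₂.2 ⟨hvM, Or.inr rfl⟩
          have hMsplit : (M ∩ (C₁ ∪ {v})) ∪ (M ∩ (C₂ ∪ {v})) = M := by
            rw [← Set.inter_union_distrib_left]
            apply Set.inter_eq_self_of_subset_left
            intro z hz
            by_cases hzv : z = v
            · exact Or.inl (Or.inr hzv)
            · have hzz : z ∈ C₁ ∪ C₂ := hSsplit ▸ (⟨hMS hz, hzv⟩ : z ∈ S \ {v})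
              rcases hzz with h | h
              · exact Or.inl (Or.inl h)
              · exact Or.inr (Or.inl h)
          have hMinter : (M ∩ (C₁ ∪ {v})) ∩ (M ∩ (C₂ ∪ {v})) = {v} := by
            ext z
            simp only [Set.mem_inter_iff, Set.mem_union, Set.mem_singleton_iff]
            constructor
            · rintro ⟨⟨hzM, h1 | h1⟩, ⟨-, h2 | h2⟩⟩
              · exact (hdisj z h1 h2).elim
              · exact h2
              · exact h1
              · exact h1
            · rintro rfl
              exact ⟨⟨hvM, Or.inr rfl⟩, hvM, Or.inr rfl⟩
          have hcardeq := Set.ncard_union_add_ncard_inter (M ∩ (C₁ ∪ {v})) (M ∩ (C₂ ∪ {v}))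
          rw [hMsplit, hMinter, Set.ncard_singleton] at hcardeq
          constructor
          · have h1 := hb₁.1
            omega
          · intro hrM
            have h1 := hb₁.2 ⟨hrM, Or.inl hrC₁⟩
            omega
        · -- v ∉ M : M lies in one side
          have hMSv : M ⊆ S \ {v} := fun z hz => ⟨hMS hz, fun h => hvM (h ▸ hz)⟩
          obtain ⟨m₀, hm₀⟩ := hMconn.1
          have hm₀' : m₀ ∈ C₁ ∪ C₂ := hSsplit ▸ hMSv hm₀
          rcases hm₀' with hm₀C | hm₀C
          · have hMC₁ : M ⊆ C₁ :=
              fun u hu => closed_rt hcl₁ hMSv hm₀C (hMconn.2 m₀ hm₀ u hu)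
            have hMsub : M ⊆ C₁ ∪ {v} := fun z hz => Or.inl (hMC₁ hz)
            have hb := hc₁ M hMsub (hmono₁ M hMsub (subset_refl M)) hMconn
            constructor
            · have h1 := hb.1
              omega
            · intro hrM
              have h1 := hb.2 hrM
              omega
          · have hMC₂ : M ⊆ C₂ :=
              fun u hu => closed_rt hcl₂ hMSv hm₀C (hMconn.2 m₀ hm₀ u hu)
            have hMsub : M ⊆ C₂ ∪ {v} := fun z hz => Or.inl (hMC₂ hz)
            have hb := hc₂ M hMsub (hmono₂ M hMsub (subset_refl M)) hMconn
            constructor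
            · have h1 := hb.1
              omega
            · intro hrM
              exact (hdisj r hrC₁ (hMC₂ hrM)).elim

end ClusterProof

/-- Every minimal induced connected subgraph `H = G.induce S` of a
connected graph `G` containing a set `A` with `|A| = k ≥ 2` can be 2-coloured so
that each monochromatic component has at most `⌈k/2⌉` vertices (equivalently,
every monochromatic connected subset of `S` has at most `⌈k/2⌉` vertices). -/
theorem minimal_connected_subgraph_two_colouring_clustering {V : Type*} [Fintype V]
    (G : SimpleGraph V) (hG : G.Connected) (A S : Set V) (k : ℕ) (hk : 2 ≤ k)
    (hA : A.ncard = k) (hAS : A ⊆ S) (hconn : (G.induce S).Connected)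
    (hmin : ∀ S' : Set V, S' ⊆ S → A ⊆ S' → (G.induce S').Connected → S' = S) :
    ∃ c : V → Fin 2, ∀ M : Set V, M ⊆ S → (∀ u ∈ M, ∀ w ∈ M, c u = c w) →
      (G.induce M).Connected → M.ncard ≤ (k + 1) / 2 := by
  classical
  have hA2 : 2 ≤ A.ncard := hA ▸ hk
  have hApos : 0 < A.ncard := by omega
  obtain ⟨r, hr⟩ := (Set.ncard_pos (Set.toFinite _)).1 hApos
  obtain ⟨c, hc⟩ := ClusterProof.main G S.ncard S A r le_rfl hA2 hr hAS
    (ClusterProof.conn_iff_induce.1 hconn)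
    (fun S' h1 h2 h3 => hmin S' h1 h2 (ClusterProof.conn_iff_induce.2 h3))
  exact ⟨c, fun M h1 h2 h3 =>
    hA ▸ (hc M h1 h2 (ClusterProof.conn_iff_induce.1 h3)).1⟩
end

section
/- Suppose a graph G has a connected partition H_1,…,H_ℓ such that each H_i is adjacent to at most k of the subgraphs H_1,…,H_{i−1}, and each H_i has maximum degree at most d. Then G is (k+1)-colourable with defect d, i.e., there is a (k+1)-colouring of V(G) in which every vertex has at most d neighbours of its own colour. -/
open Classical in
noncomputable def colAux {ℓ k : ℕ} (A : Fin ℓ → Fin ℓ → Prop) (i : Fin ℓ) : Fin (k + 1) :=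
  let f : ∀ j : Fin ℓ, j < i → Fin (k + 1) := fun j _ => colAux A j
  if hc : ∃ c : Fin (k + 1), ∀ j : Fin ℓ, (h : j < i) → A j i → f j h ≠ c
  then hc.choose else ⟨0, Nat.succ_pos k⟩
termination_by i

lemma colAux_spec {ℓ k : ℕ} (A : Fin ℓ → Fin ℓ → Prop)
    (hA : ∀ i : Fin ℓ, {j : Fin ℓ | j < i ∧ A j i}.ncard ≤ k) :
    ∀ i j : Fin ℓ, j < i → A j i → colAux (k := k) A j ≠ colAux (k := k) A i := by
  intro i j hji hAji
  have hex : ∃ c : Fin (k + 1), ∀ j : Fin ℓ, j < i → A j i → colAux (k := k) A j ≠ c := by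
    by_contra hcon
    push_neg at hcon
    have himg : (Set.univ : Set (Fin (k + 1))) ⊆
        colAux (k := k) A '' {j : Fin ℓ | j < i ∧ A j i} := by
      intro c _
      obtain ⟨j', hj1, hj2, hj3⟩ := hcon c
      exact ⟨j', ⟨hj1, hj2⟩, hj3⟩
    have h1 : (Set.univ : Set (Fin (k + 1))).ncard ≤
        (colAux (k := k) A '' {j : Fin ℓ | j < i ∧ A j i}).ncard :=
      Set.ncard_le_ncard himg (Set.toFinite _)
    have h2 := Set.ncard_image_le (f := colAux (k := k) A)
      (s := {j : Fin ℓ | j < i ∧ A j i}) (Set.toFinite _)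
    have h4 := hA i
    have h3 : (Set.univ : Set (Fin (k + 1))).ncard = k + 1 := by
      simp [Set.ncard_univ]
    omega
  have heq : colAux (k := k) A i = hex.choose := by
    rw [colAux]
    exact dif_pos hex
  rw [heq]
  exact hex.choose_spec j hji hAji

/-- If a graph `G` has a connected partition `H 0, …, H (ℓ-1)` such
that each part is adjacent to at most `k` earlier parts and each part induces a
subgraph of maximum degree at most `d`, then `G` is `(k+1)`-colourable with
defect `d`. -/
theorem connected_partition_defective_colouring {V : Type*} [Fintype V]
    (G : SimpleGraph V) (k d ℓ : ℕ) (H : Fin ℓ → Set V)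
    (hnonempty : ∀ i, (H i).Nonempty)
    (hdisj : ∀ i j, i ≠ j → Disjoint (H i) (H j))
    (hcover : ∀ v : V, ∃ i, v ∈ H i)
    (hconn : ∀ i, (G.induce (H i)).Connected)
    (hadj : ∀ i : Fin ℓ,
      {j : Fin ℓ | j < i ∧ ∃ u ∈ H j, ∃ w ∈ H i, G.Adj u w}.ncard ≤ k)
    (hdeg : ∀ i, ∀ v ∈ H i, {w ∈ H i | G.Adj v w}.ncard ≤ d) :
    ∃ c : V → Fin (k + 1), ∀ v : V, {w : V | G.Adj v w ∧ c w = c v}.ncard ≤ d := by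
  classical
  set A : Fin ℓ → Fin ℓ → Prop := fun j i => ∃ u ∈ H j, ∃ w ∈ H i, G.Adj u w with hAdef
  have hspec := colAux_spec (k := k) A hadj
  set part : V → Fin ℓ := fun v => (hcover v).choose with hpart
  have hmem : ∀ v, v ∈ H (part v) := fun v => (hcover v).choose_spec
  refine ⟨fun v => colAux A (part v), fun v => ?_⟩
  have hsub : {w : V | G.Adj v w ∧ colAux (k := k) A (part w) = colAux A (part v)} ⊆
      {w ∈ H (part v) | G.Adj v w} := by
    intro w ⟨hvw, hcw⟩
    rcases lt_trichotomy (part w) (part v) with h | h | h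
    · exact absurd hcw (hspec _ _ h ⟨w, hmem w, v, hmem v, hvw.symm⟩)
    · exact ⟨h ▸ hmem w, hvw⟩
    · exact absurd hcw.symm (hspec _ _ h ⟨v, hmem v, w, hmem w, hvw⟩)
  calc {w : V | G.Adj v w ∧ colAux (k := k) A (part w) = colAux A (part v)}.ncard
      ≤ {w ∈ H (part v) | G.Adj v w}.ncard := Set.ncard_le_ncard hsub (Set.toFinite _)
    _ ≤ d := hdeg _ v (hmem v)
end

section
/- Suppose a graph G has a connected partition H_1,…,H_ℓ such that each H_i is adjacent to at most k of the subgraphs H_1,…,H_{i−1}, and each H_i admits a 2-colouring with every monochromatic component of size at most c. Then G admits a (2k+2)-colouring in which every monochromatic component has at most c vertices. -/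
lemma greedy_pair_colouring (k : ℕ) : ∀ (ℓ : ℕ) (N : Fin ℓ → Fin ℓ → Prop),
    (∀ i, {j | j < i ∧ N j i}.ncard ≤ k) →
    ∃ p : Fin ℓ → Fin (k+1), ∀ i j : Fin ℓ, j < i → N j i → p j ≠ p i := by
  intro ℓ
  induction ℓ with
  | zero => exact fun N _ => ⟨Fin.elim0, fun i => i.elim0⟩
  | succ n ih =>
    intro N hN
    obtain ⟨p, hp⟩ := ih (fun j i => N j.castSucc i.castSucc) (by
      intro i
      have hsub : Fin.castSucc '' {j : Fin n | j < i ∧ N j.castSucc i.castSucc}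
          ⊆ {j : Fin (n+1) | j < i.castSucc ∧ N j i.castSucc} := by
        rintro _ ⟨j, ⟨hj1, hj2⟩, rfl⟩
        exact ⟨by simpa using hj1, hj2⟩
      calc {j : Fin n | j < i ∧ N j.castSucc i.castSucc}.ncard
          = (Fin.castSucc '' {j : Fin n | j < i ∧ N j.castSucc i.castSucc}).ncard :=
            (Set.ncard_image_of_injective _ (Fin.castSucc_injective n)).symm
        _ ≤ {j : Fin (n+1) | j < i.castSucc ∧ N j i.castSucc}.ncard :=
            Set.ncard_le_ncard hsub (Set.toFinite _)
        _ ≤ k := hN _)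
    set S : Set (Fin (k+1)) := p '' {j : Fin n | N j.castSucc (Fin.last n)} with hSdef
    have hS : S.ncard ≤ k := by
      have h1 : S.ncard ≤ {j : Fin n | N j.castSucc (Fin.last n)}.ncard :=
        Set.ncard_image_le (Set.toFinite _)
      have hsub : Fin.castSucc '' {j : Fin n | N j.castSucc (Fin.last n)}
          ⊆ {j : Fin (n+1) | j < Fin.last n ∧ N j (Fin.last n)} := by
        rintro _ ⟨j, hj, rfl⟩
        exact ⟨Fin.castSucc_lt_last j, hj⟩
      have h2 : {j : Fin n | N j.castSucc (Fin.last n)}.ncard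
          ≤ {j : Fin (n+1) | j < Fin.last n ∧ N j (Fin.last n)}.ncard := by
        rw [← Set.ncard_image_of_injective _ (Fin.castSucc_injective n)]
        exact Set.ncard_le_ncard hsub (Set.toFinite _)
      exact h1.trans (h2.trans (hN _))
    have ha : ∃ a : Fin (k+1), a ∉ S := by
      by_contra h
      push_neg at h
      have : S = Set.univ := Set.eq_univ_of_forall h
      rw [this] at hS
      simp [Set.ncard_univ] at hS
    obtain ⟨a, ha⟩ := ha
    refine ⟨Fin.snoc p a, ?_⟩
    intro i j hlt hNji
    rcases Fin.eq_castSucc_or_eq_last i with ⟨i', rfl⟩ | rfl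
    · have hjne : j ≠ Fin.last n := (hlt.trans (Fin.castSucc_lt_last i')).ne
      obtain ⟨j', rfl⟩ := Fin.exists_castSucc_eq.2 hjne
      rw [Fin.snoc_castSucc, Fin.snoc_castSucc]
      exact hp i' j' (by simpa using hlt) hNji
    · have hjne : j ≠ Fin.last n := hlt.ne
      obtain ⟨j', rfl⟩ := Fin.exists_castSucc_eq.2 hjne
      rw [Fin.snoc_castSucc, Fin.snoc_last]
      exact fun h => ha ⟨j', hNji, h⟩

/-- If a graph `G` has a connected partition `H 0, …, H (ℓ-1)` such
that each part is adjacent to at most `k` earlier parts and each part admits a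
2-colouring with all monochromatic components of size at most `c`, then `G`
admits a `(2k+2)`-colouring in which every monochromatic component has at most
`c` vertices. -/
theorem connected_partition_clustered_colouring {V : Type*} [Fintype V]
    (G : SimpleGraph V) (k c ℓ : ℕ) (H : Fin ℓ → Set V)
    (hnonempty : ∀ i, (H i).Nonempty)
    (hdisj : ∀ i j, i ≠ j → Disjoint (H i) (H j))
    (hcover : ∀ v : V, ∃ i, v ∈ H i)
    (hconn : ∀ i, (G.induce (H i)).Connected)
    (hadj : ∀ i : Fin ℓ,
      {j : Fin ℓ | j < i ∧ ∃ u ∈ H j, ∃ w ∈ H i, G.Adj u w}.ncard ≤ k)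
    (hcluster : ∀ i : Fin ℓ, ∃ f : V → Fin 2,
      ∀ M : Set V, M ⊆ H i → (∀ u ∈ M, ∀ w ∈ M, f u = f w) →
        (G.induce M).Connected → M.ncard ≤ c) :
    ∃ g : V → Fin (2 * k + 2), ∀ M : Set V, (∀ u ∈ M, ∀ w ∈ M, g u = g w) →
      (G.induce M).Connected → M.ncard ≤ c := by
  classical
  -- index of each vertex
  set idx : V → Fin ℓ := fun v => (hcover v).choose with hidxdef
  have hidx : ∀ v, v ∈ H (idx v) := fun v => (hcover v).choose_spec
  have hidx_uniq : ∀ v (j : Fin ℓ), v ∈ H j → j = idx v := by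
    intro v j hj
    by_contra hne
    exact Set.disjoint_left.1 (hdisj j (idx v) hne) hj (hidx v)
  -- 2-colourings of the parts
  set f : Fin ℓ → V → Fin 2 := fun i => (hcluster i).choose with hfdef
  have hf : ∀ i, ∀ M : Set V, M ⊆ H i → (∀ u ∈ M, ∀ w ∈ M, f i u = f i w) →
      (G.induce M).Connected → M.ncard ≤ c := fun i => (hcluster i).choose_spec
  -- greedy pair colouring
  obtain ⟨p, hp⟩ := greedy_pair_colouring k ℓ
    (fun j i => ∃ u ∈ H j, ∃ w ∈ H i, G.Adj u w) hadj
  refine ⟨fun v => ⟨2 * (p (idx v)).val + (f (idx v) v).val, by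
    have h1 := (p (idx v)).isLt
    have h2 := (f (idx v) v).isLt
    omega⟩, ?_⟩
  intro M hmono hMconn
  -- monochromatic vertices in adjacent positions have the same index
  have hedge : ∀ u ∈ M, ∀ w ∈ M, G.Adj u w → idx u = idx w := by
    intro u hu w hw huw
    by_contra hne
    have hg := hmono u hu w hw
    have hval : 2 * (p (idx u)).val + (f (idx u) u).val
        = 2 * (p (idx w)).val + (f (idx w) w).val := congrArg Fin.val hg
    have hpval : p (idx u) = p (idx w) := by
      have h1 := (f (idx u) u).isLt
      have h2 := (f (idx w) w).isLt
      exact Fin.ext (by omega)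
    rcases lt_or_gt_of_ne hne with hlt | hlt
    · exact hp (idx w) (idx u) hlt ⟨u, hidx u, w, hidx w, huw⟩ hpval
    · exact hp (idx u) (idx w) hlt ⟨w, hidx w, u, hidx u, huw.symm⟩ hpval.symm
  obtain ⟨⟨v0, hv0⟩⟩ := hMconn.nonempty
  have hwalk : ∀ (a b : ↥M), (G.induce M).Walk a b → idx a.1 = idx b.1 := by
    intro a b W
    induction W with
    | nil => rfl
    | cons h _ ih =>
      rename_i x y _ _
      exact (hedge x.1 x.2 y.1 y.2 h).trans ih
  have hconst : ∀ u ∈ M, idx u = idx v0 := fun u hu =>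
    (hMconn ⟨u, hu⟩ ⟨v0, hv0⟩).elim fun W => hwalk _ _ W
  have hMsub : M ⊆ H (idx v0) := fun u hu => by
    rw [← hconst u hu]; exact hidx u
  refine hf (idx v0) M hMsub ?_ hMconn
  intro u hu w hw
  have hval : 2 * (p (idx u)).val + (f (idx u) u).val
      = 2 * (p (idx w)).val + (f (idx w) w).val := congrArg Fin.val (hmono u hu w hw)
  rw [hconst u hu, hconst w hw] at hval
  exact Fin.ext (by omega)
end

section
/- Let G be a graph and T a tree with V(T) = V(G) such that for every edge xy of T, the number of edges of G with one endpoint in the component of T−xy containing x and the other endpoint in the component containing y is at most k. Then G admits a 2-colouring in which every vertex has at most k neighbours of its own colour. -/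
open SimpleGraph
open scoped Classical
set_option linter.unusedSectionVars false

namespace TreeCutBoundAux

variable {V : Type*} [Fintype V] [DecidableEq V] (G T : SimpleGraph V) (hT : T.IsTree) (r : V)

/-- The canonical path from the root `r` to `w` in the tree `T`. -/
noncomputable def rpath (w : V) : T.Walk r w :=
  (hT.existsUnique_path r w).choose

lemma rpath_isPath (w : V) : (rpath T hT r w).IsPath :=
  (hT.existsUnique_path r w).choose_spec.1

lemma rpath_unique {w : V} (q : T.Walk r w) (hq : q.IsPath) : q = rpath T hT r w :=
  (hT.existsUnique_path r w).choose_spec.2 q hq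

/-- Depth of a vertex: length of its root path. -/
noncomputable def depth (w : V) : ℕ := (rpath T hT r w).length

lemma rpath_takeUntil {w x : V} (hx : x ∈ (rpath T hT r w).support) :
    (rpath T hT r w).takeUntil x hx = rpath T hT r x :=
  rpath_unique T hT r _ ((rpath_isPath T hT r w).takeUntil hx)

lemma depth_lt {w x : V} (hx : x ∈ (rpath T hT r w).support) (hxw : x ≠ w) :
    depth T hT r x < depth T hT r w := by
  have hsplit := (rpath T hT r w).take_spec hx
  have hlen := congrArg Walk.length hsplit
  rw [Walk.length_append] at hlen
  have hdx : depth T hT r x = ((rpath T hT r w).takeUntil x hx).length := by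
    rw [rpath_takeUntil T hT r hx]; rfl
  have hpos : 0 < ((rpath T hT r w).dropUntil x hx).length := by
    rcases Nat.eq_zero_or_pos ((rpath T hT r w).dropUntil x hx).length with h0 | h
    · exact absurd (Walk.eq_of_length_eq_zero h0) hxw
    · exact h
  rw [hdx]
  unfold depth
  omega

lemma depth_root : depth T hT r r = 0 := by
  have h : (Walk.nil : T.Walk r r) = rpath T hT r r :=
    rpath_unique T hT r _ Walk.IsPath.nil
  unfold depth
  rw [← h]
  rfl

lemma eq_root_of_depth_eq_zero {x : V} (h : depth T hT r x = 0) : x = r :=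
  (Walk.eq_of_length_eq_zero h).symm

/-- The set of `G`-neighbours of `w` lying strictly on its root path (strict ancestors). -/
def ancSet (w : V) : Set V :=
  {x | G.Adj x w ∧ x ∈ (rpath T hT r w).support ∧ x ≠ w}

/-- The strict-ancestor `G`-neighbour of `w` of minimal depth (junk value `w` if none). -/
noncomputable def x1 (w : V) : V :=
  if h : (ancSet G T hT r w).Nonempty then
    (Set.exists_min_image (ancSet G T hT r w) (depth T hT r) (Set.toFinite _) h).choose
  else w

lemma x1_spec {w : V} (h : (ancSet G T hT r w).Nonempty) :
    x1 G T hT r w ∈ ancSet G T hT r w ∧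
      ∀ y ∈ ancSet G T hT r w, depth T hT r (x1 G T hT r w) ≤ depth T hT r y := by
  rw [x1, dif_pos h]
  obtain ⟨h1, h2⟩ :=
    (Set.exists_min_image (ancSet G T hT r w) (depth T hT r) (Set.toFinite _) h).choose_spec
  exact ⟨h1, h2⟩

lemma x1_depth_lt {w : V} (h : (ancSet G T hT r w).Nonempty) :
    depth T hT r (x1 G T hT r w) < depth T hT r w := by
  obtain ⟨hmem, -⟩ := x1_spec G T hT r h
  exact depth_lt T hT r hmem.2.1 hmem.2.2

/-- The colouring: each vertex takes the colour opposite to its highest strict-ancestor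
`G`-neighbour. -/
noncomputable def col (w : V) : Bool :=
  if h : (ancSet G T hT r w).Nonempty then !(col (x1 G T hT r w)) else false
termination_by depth T hT r w
decreasing_by exact x1_depth_lt G T hT r h

lemma col_eq (w : V) :
    col G T hT r w =
      if h : (ancSet G T hT r w).Nonempty then !(col G T hT r (x1 G T hT r w)) else false := by
  rw [col]

end TreeCutBoundAux

open TreeCutBoundAux

/-- If `T` is a tree on the vertex set of `G` such that for every
edge `xy` of `T` at most `k` edges of `G` cross between the two components of
`T - xy`, then `G` is 2-colourable with defect `k`. -/
theorem tree_cut_bound_two_colouring {V : Type*} [Fintype V]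
    (G T : SimpleGraph V) (hT : T.IsTree) (k : ℕ)
    (hcut : ∀ x y : V, T.Adj x y →
      {p : V × V |
          (T.deleteEdges {s(x, y)}).Reachable x p.1 ∧
          (T.deleteEdges {s(x, y)}).Reachable y p.2 ∧
          G.Adj p.1 p.2}.ncard ≤ k) :
    ∃ c : V → Bool, ∀ v : V, {w : V | G.Adj v w ∧ c w = c v}.ncard ≤ k := by
  classical
  letI : DecidableEq V := Classical.decEq V
  have hV : Nonempty V := hT.isConnected.nonempty
  obtain ⟨r⟩ := hV
  refine ⟨col G T hT r, fun v => ?_⟩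
  by_cases hvr : v = r
  · -- the root has no same-coloured neighbours
    rw [hvr]
    have hempty : {w : V | G.Adj r w ∧ col G T hT r w = col G T hT r r} = ∅ := by
      ext w
      simp only [Set.mem_setOf_eq, Set.mem_empty_iff_false, iff_false, not_and]
      intro hadj
      have hA : r ∈ ancSet G T hT r w :=
        ⟨hadj, Walk.start_mem_support _, G.ne_of_adj hadj⟩
      have hne : (ancSet G T hT r w).Nonempty := ⟨r, hA⟩
      have hmin := (x1_spec G T hT r hne).2 r hA
      rw [depth_root] at hmin
      have hx1r : x1 G T hT r w = r :=
        eq_root_of_depth_eq_zero T hT r (Nat.le_zero.mp hmin)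
      rw [col_eq G T hT r w, dif_pos hne, hx1r]
      cases col G T hT r r <;> simp
    rw [hempty]
    simp
  · -- v ≠ r : find the parent p of v
    obtain ⟨p, hadj, hcons, hvp⟩ :
        ∃ (p : V) (h : T.Adj p v),
          rpath T hT r v = (rpath T hT r p).concat h ∧ v ∉ (rpath T hT r p).support := by
      cases hq : (rpath T hT r v).reverse with
      | nil => exact absurd rfl (Ne.symm hvr)
      | cons h q' =>
        rename_i x
        have hrev : rpath T hT r v = (Walk.cons h q').reverse := by
          rw [← hq, Walk.reverse_reverse]
        have hconc : rpath T hT r v = q'.reverse.concat h.symm := by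
          rw [hrev, Walk.reverse_cons, Walk.concat_eq_append]
        have hqrp : q'.reverse.IsPath := by
          have := rpath_isPath T hT r v
          rw [hconc, Walk.concat_eq_append] at this
          exact this.of_append_left
        have hqr : q'.reverse = rpath T hT r x := rpath_unique T hT r _ hqrp
        have hvnotin : v ∉ (rpath T hT r x).support := by
          have hnd := (rpath_isPath T hT r v).support_nodup
          rw [hconc, Walk.support_concat, hqr] at hnd
          have := (List.nodup_append'.mp hnd).2.2
          intro hmem
          exact this hmem (List.mem_singleton_self v)
        refine ⟨x, h.symm, ?_, hvnotin⟩
        rw [hconc, hqr]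
    set T' := T.deleteEdges {s(p, v)} with hT'
    -- reach from a walk avoiding v
    have avoid : ∀ {a b : V} (q : T.Walk a b), v ∉ q.support → T'.Reachable a b := by
      intro a b q hq
      refine ⟨q.toDeleteEdges _ ?_⟩
      intro e he
      simp only [Set.mem_singleton_iff]
      rintro rfl
      exact hq (q.snd_mem_support_of_mem_edges he)
    have reach_r_p : T'.Reachable r p := avoid (rpath T hT r p) hvp
    -- forward: on v's side
    have forward : ∀ {w : V}, (hvw : v ∈ (rpath T hT r w).support) → T'.Reachable v w := by
      intro w hvw
      refine ⟨((rpath T hT r w).dropUntil v hvw).toDeleteEdges _ ?_⟩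
      intro e he
      simp only [Set.mem_singleton_iff]
      rintro rfl
      have hpq : p ∈ ((rpath T hT r w).dropUntil v hvw).support :=
        Walk.fst_mem_support_of_mem_edges _ he
      have hp_take : p ∈ ((rpath T hT r w).takeUntil v hvw).support := by
        rw [rpath_takeUntil T hT r hvw, hcons, Walk.support_concat]
        exact List.mem_append_left _ (Walk.end_mem_support _)
      have hnd := (rpath_isPath T hT r w).support_nodup
      rw [← Walk.take_spec (rpath T hT r w) hvw, Walk.support_append] at hnd
      have hdisj := (List.nodup_append'.mp hnd).2.2
      have hpv : p ≠ v := T.ne_of_adj hadj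
      have htail : p ∈ ((rpath T hT r w).dropUntil v hvw).support.tail := by
        have hc := ((rpath T hT r w).dropUntil v hvw).support_eq_cons
        rw [hc] at hpq
        rcases List.mem_cons.mp hpq with h1 | h1
        · exact absurd h1 hpv
        · exact h1
      exact hdisj hp_take htail
    -- complement: on p's side
    have complement : ∀ {w : V}, v ∉ (rpath T hT r w).support → T'.Reachable p w := by
      intro w hvw
      have h1 : T'.Reachable r w := by
        refine avoid (rpath T hT r w) hvw
      exact reach_r_p.symm.trans h1
    -- bridge
    have hbridge : ¬ T'.Reachable p v := by
      have hbr : T.IsBridge s(p, v) :=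
        (isAcyclic_iff_forall_adj_isBridge.mp hT.2) hadj
      exact hbr
    have reach_imp_support : ∀ {w : V}, T'.Reachable v w → v ∈ (rpath T hT r w).support := by
      intro w hr
      by_contra hvw
      exact hbridge ((complement hvw).trans hr.symm)
    -- the injection
    set S := {w : V | G.Adj v w ∧ col G T hT r w = col G T hT r v} with hS
    set Tgt := {q : V × V | T'.Reachable p q.1 ∧ T'.Reachable v q.2 ∧ G.Adj q.1 q.2} with hTgt
    have hmain : S.ncard ≤ Tgt.ncard := by
      apply Set.ncard_le_ncard_of_injOn
        (fun w => if T'.Reachable v w then (x1 G T hT r w, w) else (w, v))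
        (ht := Set.toFinite _)
      · -- maps to
        intro w hw
        obtain ⟨hadjG, hcol⟩ := hw
        by_cases hr : T'.Reachable v w
        · simp only [if_pos hr]
          have hsup : v ∈ (rpath T hT r w).support := reach_imp_support hr
          have hA : v ∈ ancSet G T hT r w := ⟨hadjG, hsup, G.ne_of_adj hadjG⟩
          have hne : (ancSet G T hT r w).Nonempty := ⟨v, hA⟩
          have hx1v : x1 G T hT r w ≠ v := by
            intro heq
            rw [col_eq G T hT r w, dif_pos hne, heq] at hcol
            cases col G T hT r v <;> simp_all
          have hmin := (x1_spec G T hT r hne).2 v hA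
          have hnotsup : v ∉ (rpath T hT r (x1 G T hT r w)).support := by
            intro hs
            have := depth_lt T hT r hs (Ne.symm hx1v)
            omega
          refine ⟨complement hnotsup, hr, (x1_spec G T hT r hne).1.1⟩
        · simp only [if_neg hr]
          have hvw : v ∉ (rpath T hT r w).support := fun hs => hr (forward hs)
          exact ⟨complement hvw, Reachable.refl v, hadjG.symm⟩
      · -- injective
        intro w hw w' hw' heq
        dsimp only at heq
        by_cases h1 : T'.Reachable v w <;> by_cases h2 : T'.Reachable v w'
        · rw [if_pos h1, if_pos h2, Prod.mk.injEq] at heq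
          exact heq.2
        · rw [if_pos h1, if_neg h2, Prod.mk.injEq] at heq
          exact absurd heq.2 (Ne.symm (G.ne_of_adj hw.1))
        · rw [if_neg h1, if_pos h2, Prod.mk.injEq] at heq
          exact absurd heq.2 (G.ne_of_adj hw'.1)
        · rw [if_neg h1, if_neg h2, Prod.mk.injEq] at heq
          exact heq.1
    exact hmain.trans (hcut p v hadj)
end

section
/- For every s ≥ 1, t ≥ max{s,3}, and c ≥ 1, define graphs G_s recursively: G_1 is a path on c+1 vertices, and for s ≥ 2, G_s is obtained from c disjoint copies of G_{s−1} by adding one vertex adjacent to all others. Then every s-colouring of G_s has a monochromatic component with more than c vertices. -/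
/-- Add a dominating vertex (the vertex `none`) to a graph. -/
def SimpleGraph.addDominatingVertex {α : Type*} (H : SimpleGraph α) :
    SimpleGraph (Option α) where
  Adj u v :=
    match u, v with
    | none, none => False
    | none, some _ => True
    | some _, none => True
    | some a, some b => H.Adj a b
  symm := by
    constructor
    rintro (_ | a) (_ | b) h <;> simp_all
    exact h.symm
  loopless := by
    constructor
    rintro (_ | a) h <;> simp_all

/-- The disjoint union of `c` copies of a graph. -/
def SimpleGraph.copies {α : Type*} (c : ℕ) (H : SimpleGraph α) :
    SimpleGraph (Fin c × α) where
  Adj u v := u.1 = v.1 ∧ H.Adj u.2 v.2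
  symm := ⟨by rintro ⟨i, a⟩ ⟨j, b⟩ ⟨h1, h2⟩; exact ⟨h1.symm, h2.symm⟩⟩
  loopless := ⟨by rintro ⟨i, a⟩ ⟨-, h⟩; exact H.irrefl h⟩

/-- Vertex type of the recursively defined graph `G_{s+1}`. -/
def GsVertex (c : ℕ) : ℕ → Type
  | 0 => Fin (c + 1)
  | s + 1 => Option (Fin c × GsVertex c s)

/-- The recursively defined graph: `Gs c 0 = G_1` is a path on `c+1` vertices,
and `Gs c s = G_{s+1}` is obtained from `c` disjoint copies of `Gs c (s-1)` by
adding one dominating vertex. -/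
def Gs (c : ℕ) : (s : ℕ) → SimpleGraph (GsVertex c s)
  | 0 => SimpleGraph.pathGraph (c + 1)
  | s + 1 => (SimpleGraph.copies c (Gs c s)).addDominatingVertex

lemma Gs_key (c : ℕ) (hc : 1 ≤ c) : ∀ s (f : GsVertex c s → Fin (s + 1)),
    ∃ M : Set (GsVertex c s), (∀ u ∈ M, ∀ w ∈ M, f u = f w) ∧
      ((Gs c s).induce M).Connected ∧ c < M.ncard := by
  intro s
  induction s with
  | zero =>
    intro f
    refine ⟨Set.univ, fun u _ w _ => Fin.ext (by omega), ?_, ?_⟩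
    · exact (SimpleGraph.induceUnivIso (Gs c 0)).connected_iff.mpr
        (SimpleGraph.pathGraph_connected c)
    · show c < (Set.univ : Set (Fin (c + 1))).ncard
      simp [Set.ncard_univ]
  | succ s ih =>
    intro f
    set k : Fin (s + 2) := f none with hk
    by_cases hA : ∃ i : Fin c, ∀ a : GsVertex c s, f (some (i, a)) ≠ k
    · obtain ⟨i, hi⟩ := hA
      choose g hg using fun a => Fin.exists_succAbove_eq (hi a)
      obtain ⟨M', hmono, hconn, hcard⟩ := ih g
      refine ⟨(fun a => some (i, a)) '' M', ?_, ?_, ?_⟩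
      · rintro u ⟨a, ha, rfl⟩ w ⟨b, hb, rfl⟩
        rw [← hg a, ← hg b, hmono a ha b hb]
      · -- iso between induce M' and induce of image
        have e : ((Gs c s).induce M') ≃g
            ((Gs c (s+1)).induce ((fun a => some (i, a)) '' M')) := by
          refine ⟨Equiv.Set.image _ M'
            (fun a b h => congrArg Prod.snd (Option.some.inj h)), ?_⟩
          rintro ⟨a, ha⟩ ⟨b, hb⟩
          show (Gs c (s+1)).Adj (some (i, a)) (some (i, b)) ↔ (Gs c s).Adj a b
          exact ⟨fun h => h.2, fun h => ⟨rfl, h⟩⟩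
        exact e.connected_iff.mp hconn
      · show c < Set.ncard (α := Option (Fin c × GsVertex c s)) ((fun a => some (i, a)) '' M')
        rwa [Set.ncard_image_of_injective _ (fun a b h => by
          exact congrArg Prod.snd (Option.some.inj h))]
    · push_neg at hA
      choose a ha using hA
      refine ⟨insert none (Set.range fun i => some (i, a i)), ?_, ?_, ?_⟩
      · rintro u (rfl | ⟨i, rfl⟩) w (rfl | ⟨j, rfl⟩) <;> simp_all
      · haveI : Nonempty ↥(insert none (Set.range fun i => some (i, a i))) :=
          ⟨⟨none, Set.mem_insert _ _⟩⟩
        refine SimpleGraph.Connected.mk (nonempty := ⟨⟨none, Set.mem_insert _ _⟩⟩) fun u v => ?_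
        have step : ∀ w : ↥(insert none (Set.range fun i => some (i, a i))),
            ((Gs c (s+1)).induce _).Reachable w
              ⟨none, Set.mem_insert _ _⟩ := by
          rintro ⟨w, (rfl | ⟨j, rfl⟩)⟩
          · rfl
          · exact SimpleGraph.Adj.reachable (by trivial)
        exact (step u).trans (step v).symm
      · show c < Set.ncard (α := Option (Fin c × GsVertex c s))
          (insert none (Set.range fun i => some (i, a i)))
        rw [Set.ncard_insert_of_notMem (by simp), ← Set.image_univ,
          Set.ncard_image_of_injective _ (fun i j h => by
            exact congrArg Prod.fst (Option.some.inj h)),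
          Set.ncard_univ]
        simp only [Nat.card_eq_fintype_card, Fintype.card_fin]
        omega

/-- For `s ≥ 1`, `t ≥ max{s,3}`, `c ≥ 1`, every `s`-colouring of
`G_s` has a monochromatic component with more than `c` vertices. -/
theorem Gs_not_s_colourable_with_clustering (s t c : ℕ)
    (hs : 1 ≤ s) (ht : max s 3 ≤ t) (hc : 1 ≤ c)
    (f : GsVertex c (s - 1) → Fin s) :
    ∃ M : Set (GsVertex c (s - 1)), (∀ u ∈ M, ∀ w ∈ M, f u = f w) ∧
      ((Gs c (s - 1)).induce M).Connected ∧ c < M.ncard := by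
  obtain ⟨n, rfl⟩ : ∃ n, s = n + 1 := ⟨s - 1, (Nat.succ_pred_eq_of_pos hs).symm⟩
  exact Gs_key c hc n f
end

section
/- Every graph G with layered treewidth at most k satisfies scol_r(G) ≤ k(2r+1) for every r ≥ 1: there exists a linear ordering ⪯ of V(G) such that for every vertex v, the number of vertices x ⪯ v reachable from v by a path of length at most r whose internal vertices all come strictly after v in ⪯ is at most k(2r+1). -/
open SimpleGraph

/-- In a tree, every path has length equal to the distance between its endpoints. -/
private lemma tree_path_length {ι : Type*} {T : SimpleGraph ι} (hT : T.IsTree) {u v : ι}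
    (p : T.Walk u v) (hp : p.IsPath) : p.length = T.dist u v := by
  obtain ⟨q, hq, hql⟩ := hT.isConnected.exists_path_of_dist u v
  rw [← hql, (hT.existsUnique_path u v).unique hp hq]

/-- Separation lemma: if `S` induces a connected subgraph of a tree `T`, some member of `S`
is separated from `root` by `t`, and every member of `S` is at distance at least
`dist root t` from the root, then every member of `S` is separated from `root` by `t`. -/
private lemma sep_lemma {ι : Type*} {T : SimpleGraph ι} (hT : T.IsTree) (root t : ι)
    (S : Set ι) (hconn : (T.induce S).Connected)
    (s0 : ι) (hs0S : s0 ∈ S) (hs0A : ∀ w : T.Walk root s0, t ∈ w.support)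
    (hmin : ∀ s ∈ S, T.dist root t ≤ T.dist root s) :
    ∀ s ∈ S, ∀ w : T.Walk root s, t ∈ w.support := by
  classical
  intro s hs
  obtain ⟨p⟩ := hconn.preconnected ⟨s0, hs0S⟩ ⟨s, hs⟩
  have key : ∀ (a b : ↥S) (q : (T.induce S).Walk a b),
      (∀ w : T.Walk root a.1, t ∈ w.support) → ∀ w : T.Walk root b.1, t ∈ w.support := by
    intro a b q
    induction q with
    | nil => exact fun h => h
    | @cons a c b h q ih =>
      intro ha
      apply ih
      by_contra hc
      push_neg at hc
      obtain ⟨w0, hw0⟩ := hc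
      have hQ : w0.bypass.IsPath := Walk.bypass_isPath w0
      have htQ : t ∉ w0.bypass.support := fun hmem => hw0 (Walk.support_bypass_subset w0 hmem)
      have hadj : T.Adj (c : ι) (a : ι) := (h : T.Adj (a : ι) (c : ι)).symm
      set Q : T.Walk root (a : ι) := w0.bypass.concat hadj with hQdef
      have hta : t ∈ Q.support := ha Q
      have hsupp : Q.support = w0.bypass.support.concat (a : ι) := by
        simp only [List.concat_eq_append]; exact Walk.support_concat _ _
      have hta' : t = (a : ι) := by
        rw [hsupp] at hta
        rcases (by simpa using hta : t ∈ w0.bypass.support ∨ t = (a : ι)) with h1 | h2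
        · exact absurd h1 htQ
        · simpa using h2
      have hQpath : Q.IsPath := by
        rw [Walk.isPath_def, hsupp, List.concat_eq_append]
        refine List.Nodup.append hQ.support_nodup (List.nodup_singleton _) ?_
        intro y hy hy'
        simp only [List.mem_singleton] at hy'
        subst hy'
        rw [← hta'] at hy
        exact htQ hy
      have hlenQ : Q.length = T.dist root (a : ι) := tree_path_length hT Q hQpath
      have hlenb : w0.bypass.length = T.dist root (c : ι) := tree_path_length hT _ hQ
      have hconcatlen : Q.length = w0.bypass.length + 1 := Walk.length_concat _ _
      have h1 : T.dist root t ≤ T.dist root (c : ι) := hmin _ c.2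
      rw [hta'] at h1
      omega
  exact key _ _ p hs0A

private lemma layer_walk {V : Type*} {G : SimpleGraph V} (L : V → ℕ)
    (hlayer : ∀ u v : V, G.Adj u v → L u ≤ L v + 1 ∧ L v ≤ L u + 1)
    {u v : V} (p : G.Walk u v) : L u ≤ L v + p.length ∧ L v ≤ L u + p.length := by
  induction p with
  | nil => simp
  | cons h q ih =>
    have := hlayer _ _ h
    simp only [Walk.length_cons]
    omega

private lemma ncard_layers {V : Type*} [Fintype V] (L : V → ℕ) (B : Set V) (k : ℕ)
    (hw : ∀ i, {v ∈ B | L v = i}.ncard ≤ k) (s : Finset ℕ) :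
    {v | v ∈ B ∧ L v ∈ s}.ncard ≤ s.card * k := by
  classical
  induction s using Finset.induction with
  | empty => simp
  | @insert a s ha ih =>
    have hsplit : {v | v ∈ B ∧ L v ∈ insert a s} =
        {v ∈ B | L v = a} ∪ {v | v ∈ B ∧ L v ∈ s} := by
      ext v
      simp only [Set.mem_setOf_eq, Set.mem_union, Finset.mem_insert]
      tauto
    calc {v | v ∈ B ∧ L v ∈ insert a s}.ncard
        ≤ {v ∈ B | L v = a}.ncard + {v | v ∈ B ∧ L v ∈ s}.ncard := by
          rw [hsplit]; exact Set.ncard_union_le _ _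
      _ ≤ k + s.card * k := add_le_add (hw a) ih
      _ = (insert a s).card * k := by rw [Finset.card_insert_of_notMem ha]; ring

/-- Every graph `G` with layered treewidth at most `k` (witnessed by
a tree decomposition `bags` over a tree `T` and a layering `L` such that every bag
meets every layer in at most `k` vertices) satisfies `scol_r(G) ≤ k(2r+1)` for
every `r ≥ 1`: there is a linear ordering of the vertices (encoded by an injection
`ord : V → ℕ`) such that for every vertex `v`, at most `k(2r+1)` vertices `x` with
`ord x ≤ ord v` are joined to `v` by a path of length at most `r` all of whose
internal vertices come strictly after `v` in the ordering. -/
theorem layeredTreewidth_strongColouringNumber {V : Type*} [Fintype V]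
    (G : SimpleGraph V) (k r : ℕ) (hr : 1 ≤ r)
    {ι : Type*} (T : SimpleGraph ι) (hT : T.IsTree) (bags : ι → Set V)
    (L : V → ℕ)
    (hlayer : ∀ u v : V, G.Adj u v → L u ≤ L v + 1 ∧ L v ≤ L u + 1)
    (hedge : ∀ u v : V, G.Adj u v → ∃ x : ι, u ∈ bags x ∧ v ∈ bags x)
    (hsub : ∀ v : V, ((T.induce {x : ι | v ∈ bags x}).Connected))
    (hwidth : ∀ (x : ι) (i : ℕ), {v ∈ bags x | L v = i}.ncard ≤ k) :
    ∃ ord : V → ℕ, Function.Injective ord ∧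
      ∀ v : V,
        {x : V | ord x ≤ ord v ∧
          ∃ p : G.Walk v x, p.IsPath ∧ p.length ≤ r ∧
            ∀ w ∈ p.support, w ≠ v → w ≠ x → ord v < ord w}.ncard ≤ k * (2 * r + 1) := by
  classical
  cases isEmpty_or_nonempty V with
  | inl hV =>
    haveI := hV
    exact ⟨fun _ => 0, fun a b _ => Subsingleton.elim a b, fun v => (hV.false v).elim⟩
  | inr hV =>
  haveI : Nonempty ι := hT.isConnected.nonempty
  set root : ι := Classical.arbitrary ι with hroot
  have hne : ∀ u : V, ∃ y : ι, u ∈ bags y := by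
    intro u
    obtain ⟨⟨y, hy⟩⟩ := (hsub u).nonempty
    exact ⟨y, hy⟩
  set D : V → ℕ := fun u => sInf (T.dist root '' {y | u ∈ bags y}) with hDdef
  have hDmem : ∀ u : V, ∃ y : ι, u ∈ bags y ∧ T.dist root y = D u := by
    intro u
    have hnimg : (T.dist root '' {y | u ∈ bags y}).Nonempty := by
      obtain ⟨y, hy⟩ := hne u
      exact ⟨T.dist root y, ⟨y, hy, rfl⟩⟩
    have : D u ∈ T.dist root '' {y | u ∈ bags y} := Nat.sInf_mem hnimg
    obtain ⟨y, hy, hyd⟩ := this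
    exact ⟨y, hy, hyd⟩
  choose home hhome hhomedist using hDmem
  have hDle : ∀ (u : V) (s : ι), u ∈ bags s → D u ≤ T.dist root s := fun u s hs =>
    Nat.sInf_le ⟨s, hs, rfl⟩
  set N := Fintype.card V with hN
  have hNpos : 0 < N := Fintype.card_pos
  set e := Fintype.equivFin V with he
  refine ⟨fun u => N * D u + (e u : ℕ), ?_, ?_⟩
  · -- injectivity
    intro a b hab
    have hab' : N * D a + ((e a : Fin N) : ℕ) = N * D b + ((e b : Fin N) : ℕ) := hab
    have hd : D a = D b := by
      have h1 : (N * D a + (e a : ℕ)) / N = D a := by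
        rw [Nat.mul_add_div hNpos, Nat.div_eq_of_lt (e a).isLt, Nat.add_zero]
      have h2 : (N * D b + (e b : ℕ)) / N = D b := by
        rw [Nat.mul_add_div hNpos, Nat.div_eq_of_lt (e b).isLt, Nat.add_zero]
      rw [← h1, ← h2, hab']
    rw [hd] at hab'
    have hem : ((e a : Fin N) : ℕ) = ((e b : Fin N) : ℕ) := Nat.add_left_cancel hab'
    exact e.injective (Fin.ext hem)
  · -- main bound
    intro v
    have hcomp : ∀ u w : V, (N * D u + (e u : ℕ)) ≤ (N * D w + (e w : ℕ)) → D u ≤ D w := by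
      intro u w h
      by_contra hlt
      push_neg at hlt
      have h1 : N * (D w + 1) ≤ N * D u := Nat.mul_le_mul_left N hlt
      have h2 : (e w : ℕ) < N := (e w).isLt
      nlinarith [h1, h2]
    have hDt : T.dist root (home v) = D v := hhomedist v
    have hsubset : {x : V | (N * D x + (e x : ℕ)) ≤ (N * D v + (e v : ℕ)) ∧
        ∃ p : G.Walk v x, p.IsPath ∧ p.length ≤ r ∧
          ∀ w ∈ p.support, w ≠ v → w ≠ x → (N * D v + (e v : ℕ)) < (N * D w + (e w : ℕ))} ⊆
        {u : V | u ∈ bags (home v) ∧ L u ∈ Finset.Icc (L v - r) (L v + r)} := by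
      rintro x ⟨hordx, p, hp, hplen, hint⟩
      have hDx : D x ≤ D v := hcomp x v hordx
      have hH : ∀ w ∈ p.support, w ≠ x → D v ≤ D w := by
        intro w hw hwx
        by_cases hwv : w = v
        · subst hwv; exact le_refl _
        · exact hcomp v w (le_of_lt (hint w hw hwv hwx))
      have finalArg : ∀ b : ι, x ∈ bags b →
          (∀ w : T.Walk root b, home v ∈ w.support) → x ∈ bags (home v) := by
        intro b hxb hAb
        obtain ⟨P0, hP0, hP0len⟩ := hT.isConnected.exists_path_of_dist root (home x)
        obtain ⟨w1⟩ := (hsub x).preconnected ⟨home x, hhome x⟩ ⟨b, hxb⟩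
        set w2 : T.Walk (home x) b :=
          w1.map (SimpleGraph.Embedding.induce {y : ι | x ∈ bags y}).toHom with hw2
        have hw2supp : ∀ z ∈ w2.support, x ∈ bags z := by
          intro z hz
          have hz2 : z ∈ (w1.map (SimpleGraph.Embedding.induce {y : ι | x ∈ bags y}).toHom).support := hz
          rw [Walk.support_map] at hz2
          obtain ⟨z', _, rfl⟩ := List.mem_map.mp hz2
          exact z'.2
        have htW := hAb (P0.append w2)
        rw [Walk.mem_support_append_iff] at htW
        rcases htW with hcase | hcase
        · have h1 : T.dist root (home v) ≤ (P0.takeUntil _ hcase).length := dist_le _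
          have h2 : (P0.takeUntil _ hcase).length ≤ P0.length :=
            Walk.length_takeUntil_le P0 hcase
          have h3 : P0.length = D x := by rw [hP0len, hhomedist x]
          have h5 := congrArg Walk.length (P0.take_spec hcase)
          rw [Walk.length_append] at h5
          have h6 : (P0.dropUntil _ hcase).length = 0 := by omega
          have h7 : home v = home x := Walk.eq_of_length_eq_zero h6
          rw [h7]
          exact hhome x
        · exact hw2supp _ hcase
      have claim : ∀ (n : ℕ) (u : V) (q : G.Walk u x), q.length ≤ n →
          (∀ w ∈ q.support, w ≠ x → D v ≤ D w) →
          (∀ s : ι, u ∈ bags s → ∀ w : T.Walk root s, home v ∈ w.support) →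
          x ∈ bags (home v) := by
        intro n
        induction n with
        | zero =>
          intro u q hq hsupp hA
          cases q with
          | nil => exact finalArg (home x) (hhome x) (hA (home x) (hhome x))
          | cons h q' => simp [Walk.length_cons] at hq
        | succ n ihn =>
          intro u q hq hsupp hA
          cases q with
          | nil => exact finalArg (home x) (hhome x) (hA (home x) (hhome x))
          | @cons _ u₂ _ h q' =>
            by_cases hux : u₂ = x
            · subst hux
              obtain ⟨b, hub, hxb⟩ := hedge _ _ h
              exact finalArg b hxb (hA b hub)
            · refine ihn u₂ q' ?_ ?_ ?_
              · rw [Walk.length_cons] at hq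
                omega
              · intro w hw hwx
                exact hsupp w (by rw [Walk.support_cons]; exact List.mem_cons_of_mem _ hw) hwx
              · intro s hs
                obtain ⟨b, hub, hu'b⟩ := hedge _ _ h
                refine sep_lemma hT root (home v) {y : ι | u₂ ∈ bags y} (hsub u₂)
                  b hu'b (hA b hub) ?_ s hs
                intro s' hs'
                rw [hDt]
                calc D v ≤ D u₂ := hsupp u₂ (by
                        rw [Walk.support_cons]
                        exact List.mem_cons_of_mem _ q'.start_mem_support) hux
                  _ ≤ T.dist root s' := hDle u₂ s' hs'
      have hxbag : x ∈ bags (home v) := by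
        refine claim p.length v p le_rfl (fun w hw hwx => hH w hw hwx) ?_
        intro s hs
        exact sep_lemma hT root (home v) {y : ι | v ∈ bags y} (hsub v)
          (home v) (hhome v) (fun w => w.end_mem_support) (by
            intro s' hs'
            rw [hDt]
            exact hDle v s' hs') s hs
      refine ⟨hxbag, ?_⟩
      have hl := layer_walk L hlayer p
      rw [Finset.mem_Icc]
      omega
    calc {x : V | (N * D x + (e x : ℕ)) ≤ (N * D v + (e v : ℕ)) ∧
          ∃ p : G.Walk v x, p.IsPath ∧ p.length ≤ r ∧
            ∀ w ∈ p.support, w ≠ v → w ≠ x →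
              (N * D v + (e v : ℕ)) < (N * D w + (e w : ℕ))}.ncard
        ≤ {u : V | u ∈ bags (home v) ∧ L u ∈ Finset.Icc (L v - r) (L v + r)}.ncard :=
          Set.ncard_le_ncard hsubset (Set.toFinite _)
      _ ≤ (Finset.Icc (L v - r) (L v + r)).card * k :=
          ncard_layers L (bags (home v)) k (fun i => hwidth (home v) i) _
      _ ≤ (2 * r + 1) * k := by
          have hc : (Finset.Icc (L v - r) (L v + r)).card = (L v + r) + 1 - (L v - r) :=
            Nat.card_Icc _ _
          have hle : (Finset.Icc (L v - r) (L v + r)).card ≤ 2 * r + 1 := by omega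
          exact Nat.mul_le_mul_right k hle
      _ = k * (2 * r + 1) := Nat.mul_comm _ _
end
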